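/- Let A_n be the n×n skew-symmetric matrix with entries +1 above the diagonal and −1 below the diagonal. Then the eigenvalues of A_n are λ_k = −i·cot(π(2k−1)/(2n)) for k = 1,…,n, and the eigenvector associated with λ_k is u_k = n^{-1/2}(1, ρ_k, …, ρ_k^{n−1})ᵀ where ρ_k = exp(−iπ(2k−1)/n). -/

import Mathlib

open Matrix Complex

lemma sum_skew (n i : ℕ) (hi : i < n) (ρ : ℂ) (hρ : ρ ≠ 1) (hρn : ρ ^ n = -1) :
    ∑ j ∈ Finset.range n, (if i < j then (1:ℂ) else if j < i then -1 else 0) * ρ ^ j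
      = (-(1 + ρ) * ρ ^ i) / (ρ - 1) := by
  have hsub : ρ - 1 ≠ 0 := sub_ne_zero.mpr hρ
  set f : ℕ → ℂ := fun j => (if i < j then (1:ℂ) else if j < i then -1 else 0) * ρ ^ j with hf
  have hii : i ≤ i + 1 := Nat.le_succ i
  have hin : i + 1 ≤ n := hi
  have split1 := Finset.sum_Ico_consecutive f (Nat.zero_le (i+1)) hin
  have split2 := Finset.sum_Ico_consecutive f (Nat.zero_le i) hii
  rw [Finset.range_eq_Ico, ← split1, ← split2]
  have e1 : ∑ j ∈ Finset.Ico 0 i, f j = -((ρ ^ i - ρ ^ 0) / (ρ - 1)) := by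
    rw [← geom_sum_Ico hρ (Nat.zero_le i), ← Finset.sum_neg_distrib]
    refine Finset.sum_congr rfl fun j hj => ?_
    have hj' : j < i := (Finset.mem_Ico.mp hj).2
    simp [hf, if_neg (not_lt.mpr hj'.le), if_pos hj', Nat.lt_asymm hj']
  have e2 : ∑ j ∈ Finset.Ico i (i+1), f j = 0 := by
    rw [Finset.sum_Ico_eq_sum_range]
    simp [hf]
  have e3 : ∑ j ∈ Finset.Ico (i+1) n, f j = (ρ ^ n - ρ ^ (i+1)) / (ρ - 1) := by
    rw [← geom_sum_Ico hρ hin]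
    refine Finset.sum_congr rfl fun j hj => ?_
    have hj' : i < j := (Finset.mem_Ico.mp hj).1
    simp [hf, if_pos hj']
  rw [e1, e2, e3, hρn]
  field_simp
  ring

def skewA (n : ℕ) : Matrix (Fin n) (Fin n) ℂ :=
  fun i j => if i < j then 1 else if j < i then -1 else 0

noncomputable def skewAEigenvalue (n : ℕ) (k : Fin n) : ℂ :=
  -Complex.I * (Real.cos (Real.pi * (2 * ((k : ℕ) + 1) - 1) / (2 * n)) /
      Real.sin (Real.pi * (2 * ((k : ℕ) + 1) - 1) / (2 * n)))

noncomputable def skewAEigenvector (n : ℕ) (k : Fin n) : Fin n → ℂ :=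
  fun j => (Real.sqrt n)⁻¹ *
    (Complex.exp (-Complex.I * Real.pi * (2 * ((k : ℕ) + 1 : ℝ) - 1) / n)) ^ (j : ℕ)

theorem skewA_eigen (n : ℕ) (hn : 0 < n) :
    (∀ k : Fin n,
      (skewA n).mulVec (skewAEigenvector n k) = skewAEigenvalue n k • skewAEigenvector n k ∧
      skewAEigenvector n k ≠ 0 ∧
      Complex.exp (-Complex.I * Real.pi * (2 * ((k : ℕ) + 1 : ℝ) - 1) / n)
        = (skewAEigenvalue n k - 1) / (skewAEigenvalue n k + 1)) ∧
    Function.Injective (skewAEigenvalue n) := by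
  have hnR : (0:ℝ) < n := Nat.cast_pos.mpr hn
  have hnR' : (n:ℝ) ≠ 0 := ne_of_gt hnR
  have hnC : (n:ℂ) ≠ 0 := Nat.cast_ne_zero.mpr hn.ne'
  have hπ : (0:ℝ) < Real.pi := Real.pi_pos
  have hbound : ∀ k : Fin n,
      0 < Real.pi * (2 * (((k:ℕ):ℝ) + 1) - 1) / (2 * n) ∧
      Real.pi * (2 * (((k:ℕ):ℝ) + 1) - 1) / (2 * n) < Real.pi := by
    intro k
    have hK0 : (0:ℝ) ≤ ((k:ℕ):ℝ) := Nat.cast_nonneg _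
    have hKn : ((k:ℕ):ℝ) < n := by exact_mod_cast k.2
    have hKn' : ((k:ℕ):ℝ) + 1 ≤ n := by exact_mod_cast k.2
    constructor
    · apply div_pos (by nlinarith) (by nlinarith)
    · rw [div_lt_iff₀ (by nlinarith)]
      nlinarith [mul_lt_mul_of_pos_left (show (2:ℝ)*(((k:ℕ):ℝ)+1)-1 < 2*n by linarith) hπ]
  constructor
  · intro k
    obtain ⟨ha0, haπ⟩ := hbound k
    set a : ℝ := Real.pi * (2 * (((k:ℕ):ℝ) + 1) - 1) / (2 * n) with ha
    set s : ℝ := Real.sin a with hs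
    set c : ℝ := Real.cos a with hc
    have hs0 : s ≠ 0 := ne_of_gt (Real.sin_pos_of_pos_of_lt_pi ha0 haπ)
    have hsC : (s:ℂ) ≠ 0 := Complex.ofReal_ne_zero.mpr hs0
    have hpyth : (s:ℂ)^2 + (c:ℂ)^2 = 1 := by
      exact_mod_cast congrArg (Complex.ofReal) (Real.sin_sq_add_cos_sq a)
    set ρ : ℂ := Complex.exp (-Complex.I * Real.pi * (2 * ((k : ℕ) + 1 : ℝ) - 1) / n) with hρdef
    have hlv : skewAEigenvalue n k = -I * ((c:ℂ) / (s:ℂ)) := by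
      simp only [skewAEigenvalue, ← ha, ← hs, ← hc]
    have hρ3 : ρ = ((Real.cos (2*a) : ℝ) : ℂ) - ((Real.sin (2*a) : ℝ) : ℂ) * I := by
      have harg : -Complex.I * Real.pi * (2 * ((k : ℕ) + 1 : ℝ) - 1) / n
          = ((-(2*a) : ℝ) : ℂ) * I := by
        rw [ha]
        push_cast
        field_simp
      rw [hρdef, harg, Complex.exp_mul_I, ← Complex.ofReal_cos, ← Complex.ofReal_sin,
        Real.cos_neg, Real.sin_neg]
      push_cast
      ring
    have hρeq : ρ = ((c:ℂ)^2 - (s:ℂ)^2) - 2*(s:ℂ)*(c:ℂ)*I := by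
      rw [hρ3, Real.cos_two_mul, Real.sin_two_mul, ← hc, ← hs]
      push_cast
      linear_combination hpyth
    have hρ1 : ρ ≠ 1 := by
      intro h
      rw [hρeq] at h
      have hre := congrArg Complex.re h
      simp [← Complex.ofReal_pow] at hre
      have hpy := Real.sin_sq_add_cos_sq a
      rw [← hs, ← hc] at hpy
      have hsq : s^2 = 0 := by linarith
      exact hs0 ((pow_eq_zero_iff two_ne_zero).mp hsq)
    have hρn : ρ ^ n = -1 := by
      rw [hρdef, ← Complex.exp_nat_mul]
      have harg2 : (n:ℂ) * (-Complex.I * Real.pi * (2 * ((k : ℕ) + 1 : ℝ) - 1) / n)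
          = (((2*(k:ℕ)+1 : ℕ)) : ℂ) * -(Real.pi * I) := by
        push_cast
        field_simp
        ring
      rw [harg2, Complex.exp_nat_mul, Complex.exp_neg, Complex.exp_pi_mul_I]
      rw [inv_neg_one]
      exact Odd.neg_one_pow ⟨(k:ℕ), by ring⟩
    have e1 : (1:ℂ) - ρ = 2*(s:ℂ)*((s:ℂ) + (c:ℂ)*I) := by
      rw [hρeq]; linear_combination (-1 : ℂ) * hpyth
    have e2 : (1:ℂ) + ρ = 2*(c:ℂ)*((c:ℂ) - (s:ℂ)*I) := by
      rw [hρeq]; linear_combination (-1 : ℂ) * hpyth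
    have hlam : skewAEigenvalue n k * (1 - ρ) = 1 + ρ := by
      rw [hlv, e1, e2]
      field_simp
      linear_combination (-(c:ℂ)^2) * Complex.I_sq
    refine ⟨?_, ?_, ?_⟩
    · funext i
      have hu : ∀ j : Fin n, skewAEigenvector n k j = (((Real.sqrt n)⁻¹ : ℝ) : ℂ) * ρ ^ (j:ℕ) :=
        fun j => rfl
      have hA : ∀ j : Fin n, skewA n i j
          = (if (i:ℕ) < (j:ℕ) then (1:ℂ) else if (j:ℕ) < (i:ℕ) then -1 else 0) := by
        intro j
        show (if i < j then (1:ℂ) else if j < i then -1 else 0) = _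
        simp only [Fin.lt_def]
      have hsum := sum_skew n (i:ℕ) i.2 ρ hρ1 hρn
      have hsub : ρ - 1 ≠ 0 := sub_ne_zero.mpr hρ1
      calc (skewA n).mulVec (skewAEigenvector n k) i
          = ∑ j : Fin n, skewA n i j * skewAEigenvector n k j := rfl
        _ = (((Real.sqrt n)⁻¹ : ℝ) : ℂ) * ∑ j : Fin n,
              (if (i:ℕ) < (j:ℕ) then (1:ℂ) else if (j:ℕ) < (i:ℕ) then -1 else 0) * ρ ^ (j:ℕ) := by
            rw [Finset.mul_sum]
            refine Finset.sum_congr rfl fun j _ => ?_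
            rw [hA j, hu j]; ring
        _ = (((Real.sqrt n)⁻¹ : ℝ) : ℂ) * ∑ j ∈ Finset.range n,
              (if (i:ℕ) < j then (1:ℂ) else if j < (i:ℕ) then -1 else 0) * ρ ^ j := by
            rw [Fin.sum_univ_eq_sum_range
              (fun j => (if (i:ℕ) < j then (1:ℂ) else if j < (i:ℕ) then -1 else 0) * ρ ^ j)]
        _ = (((Real.sqrt n)⁻¹ : ℝ) : ℂ) * ((-(1 + ρ) * ρ ^ (i:ℕ)) / (ρ - 1)) := by rw [hsum]
        _ = skewAEigenvalue n k • skewAEigenvector n k i := by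
            have hdiv : (-(1 + ρ) * ρ ^ (i:ℕ)) / (ρ - 1) = skewAEigenvalue n k * ρ ^ (i:ℕ) := by
              rw [div_eq_iff hsub]
              linear_combination (ρ ^ (i:ℕ)) * hlam
            rw [smul_eq_mul, hu i, hdiv]
            ring
    · intro h
      have h0 := congrFun h ⟨0, hn⟩
      simp [skewAEigenvector] at h0
      exact hn.ne' h0
    · have hden : skewAEigenvalue n k + 1 ≠ 0 := by
        rw [hlv]
        intro h
        have h2 : -I * (c:ℂ) + (s:ℂ) = 0 := by
          have h3 : (-I * ((c:ℂ) / (s:ℂ)) + 1) * (s:ℂ) = 0 := by rw [h]; ring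
          field_simp at h3
          linear_combination h3
        have hre := congrArg Complex.re h2
        simp at hre
        exact hs0 hre
      have e3 : ρ = -((s:ℂ) + (c:ℂ)*I)^2 := by
        rw [hρeq]; linear_combination ((c:ℂ)^2) * Complex.I_sq
      have hone : ((s:ℂ) + (c:ℂ)*I) * ((s:ℂ) - (c:ℂ)*I) = 1 := by
        linear_combination hpyth - ((c:ℂ)^2) * Complex.I_sq
      have e4 : skewAEigenvalue n k + 1 = ((s:ℂ) - (c:ℂ)*I)/(s:ℂ) := by
        rw [hlv]; field_simp; ring
      have e5 : skewAEigenvalue n k - 1 = (-(s:ℂ) - (c:ℂ)*I)/(s:ℂ) := by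
        rw [hlv]; field_simp; ring
      rw [eq_div_iff hden, e4, e5]
      field_simp
      linear_combination ((s:ℂ) - (c:ℂ)*I) * e3 + (-((s:ℂ) + (c:ℂ)*I)) * hone
  · intro k1 k2 h
    have key : ∀ k : Fin n, skewAEigenvalue n k
        = ((Real.tan (Real.pi/2 - Real.pi * (2 * (((k:ℕ):ℝ) + 1) - 1) / (2 * n)) : ℝ) : ℂ) * (-I) := by
      intro k
      simp only [skewAEigenvalue]
      rw [Real.tan_pi_div_two_sub, Real.tan_eq_sin_div_cos, inv_div]
      push_cast
      ring
    rw [key k1, key k2] at h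
    have h' : Real.tan (Real.pi/2 - Real.pi * (2 * (((k1:ℕ):ℝ) + 1) - 1) / (2 * n))
        = Real.tan (Real.pi/2 - Real.pi * (2 * (((k2:ℕ):ℝ) + 1) - 1) / (2 * n)) := by
      have := mul_right_cancel₀ (show (-I : ℂ) ≠ 0 by simp) h
      exact_mod_cast this
    obtain ⟨hb1, hb1'⟩ := hbound k1
    obtain ⟨hb2, hb2'⟩ := hbound k2
    have hx := Real.injOn_tan (Set.mem_Ioo.mpr ⟨by linarith, by linarith⟩)
      (Set.mem_Ioo.mpr ⟨by linarith, by linarith⟩) h'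
    have haa : Real.pi * (2 * (((k1:ℕ):ℝ) + 1) - 1) / (2 * n)
        = Real.pi * (2 * (((k2:ℕ):ℝ) + 1) - 1) / (2 * n) := by linarith
    rw [div_eq_div_iff (by positivity) (by positivity)] at haa
    have h2 : (2*(((k1:ℕ)):ℝ)+1) * (Real.pi * (2*(n:ℝ)))
        = (2*(((k2:ℕ)):ℝ)+1) * (Real.pi * (2*(n:ℝ))) := by linear_combination haa
    have h3 := mul_right_cancel₀ (show (Real.pi*(2*(n:ℝ))) ≠ 0 by positivity) h2
    have h4 : ((k1:ℕ):ℝ) = ((k2:ℕ):ℝ) := by linarith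
    exact Fin.ext (by exact_mod_cast h4)
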